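/- Let T be a finite rooted tree with root φ whose vertices are labeled o or m in alternating levels, with nonnegative edge weights, and suppose all relevant minimum-cost many-to-one matchings exist (a many-to-one matching requires every o-vertex to have degree exactly 1 and every m-vertex degree at least 1). For a child u of φ let T_u denote the subtree rooted at u. If φ has label o, then C(T) − C(T∖φ) = min over children u of φ of ( l(φ,u) − max(C(T_u) − C(T_u∖u), 0) ), where C denotes minimum many-to-one matching cost, T∖φ is the forest obtained by deleting φ, and l(φ,u) is the weight of edge {φ,u}. -/

import Mathlib

open Finset

/-- The set of descendants of `u` (including `u` itself) in a rooted tree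
given by the parent map `par`. -/
def desc {V : Type*} (par : V → V) (u : V) : Set V := {v | ∃ k : ℕ, par^[k] v = u}

/-- `M` (a set of vertices `v`, standing for the edges `{v, par v}`) is a many-to-one
matching of the vertex set `S` of the rooted forest with parent map `par`:
every vertex of even depth (label `o`) has degree exactly 1 and every vertex of odd
depth (label `m`) has degree at least 1. -/
def IsM2OMatching {V : Type*} [DecidableEq V] (par : V → V) (depth : V → ℕ)
    (S : Set V) (M : Finset V) : Prop :=
  (∀ v ∈ M, v ∈ S ∧ par v ∈ S ∧ v ≠ par v) ∧
  ∀ v ∈ S,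
    if Even (depth v) then
      (M.filter (fun u => par u = v)).card + (if v ∈ M then 1 else 0) = 1
    else
      1 ≤ (M.filter (fun u => par u = v)).card + (if v ∈ M then 1 else 0)

set_option linter.unusedSectionVars false
namespace M2OAux

variable {V : Type*} [Fintype V] [DecidableEq V]

lemma iterate_fixed {par : V → V} {φ : V} (hroot : par φ = φ) (k : ℕ) : par^[k] φ = φ := by
  induction k with
  | zero => rfl
  | succ n ih => rw [Function.iterate_succ_apply, hroot, ih]

lemma mem_desc_self (par : V → V) (u : V) : u ∈ desc par u := ⟨0, rfl⟩

lemma par_mem_desc {par : V → V} {u v : V} (h : v ∈ desc par u) (hv : v ≠ u) :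
    par v ∈ desc par u := by
  obtain ⟨k, hk⟩ := h
  cases k with
  | zero => exact absurd hk hv
  | succ n => exact ⟨n, by rw [← Function.iterate_succ_apply]; exact hk⟩

lemma mem_desc_of_par {par : V → V} {u w : V} (h : par w ∈ desc par u) : w ∈ desc par u := by
  obtain ⟨k, hk⟩ := h
  exact ⟨k + 1, by rw [Function.iterate_succ_apply]; exact hk⟩

lemma phi_not_mem_desc {par : V → V} {φ u : V} (hroot : par φ = φ) (hune : u ≠ φ) :
    φ ∉ desc par u := by
  rintro ⟨k, hk⟩
  rw [iterate_fixed hroot k] at hk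
  exact hune hk.symm

lemma ne_phi_of_mem_desc {par : V → V} {φ u v : V} (hroot : par φ = φ) (hune : u ≠ φ)
    (h : v ∈ desc par u) : v ≠ φ := fun hv => phi_not_mem_desc hroot hune (hv ▸ h)

open Classical in
/-- L1: restriction of a matching of `univ \ {φ}` to a child subtree. -/
lemma restrict_matching {par : V → V} {depth : V → ℕ} {φ u : V}
    (hroot : par φ = φ) (hu : par u = φ) (hune : u ≠ φ)
    {N : Finset V} (hN : IsM2OMatching par depth (Set.univ \ {φ}) N) :
    IsM2OMatching par depth (desc par u) (N.filter (fun v => v ∈ desc par u)) := by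
  obtain ⟨hN1, hN2⟩ := hN
  constructor
  · intro v hv
    rw [Finset.mem_filter] at hv
    obtain ⟨hvN, hvd⟩ := hv
    obtain ⟨-, hpv, hne⟩ := hN1 v hvN
    have hvu : v ≠ u := by
      rintro rfl
      exact hpv.2 (by simp [hu])
    exact ⟨hvd, par_mem_desc hvd hvu, hne⟩
  · intro v hv
    have hvφ : v ≠ φ := ne_phi_of_mem_desc hroot hune hv
    have hcard : (N.filter (fun v => v ∈ desc par u)).filter (fun w => par w = v) =
        N.filter (fun w => par w = v) := by
      ext w
      simp only [Finset.mem_filter, and_assoc]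
      constructor
      · rintro ⟨h1, h2, h3⟩; exact ⟨h1, h3⟩
      · rintro ⟨h1, h3⟩
        exact ⟨h1, mem_desc_of_par (h3 ▸ hv), h3⟩
    have hind : (if v ∈ N.filter (fun v => v ∈ desc par u) then 1 else 0) =
        (if v ∈ N then 1 else 0) := by
      simp [Finset.mem_filter, hv]
    have hres := hN2 v ⟨Set.mem_univ v, hvφ⟩
    rw [hcard, hind]
    exact hres

open Classical in
/-- L2: graft a subtree matching, plus the edge `{u, φ}`, onto a matching of the rest. -/
lemma graft_matching {par : V → V} {depth : V → ℕ} {φ u : V}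
    (hroot : par φ = φ) (hdepth0 : depth φ = 0)
    (hdepth : ∀ v, v ≠ φ → depth v = depth (par v) + 1)
    (hu : par u = φ) (hune : u ≠ φ)
    {N K : Finset V} (hN : IsM2OMatching par depth (Set.univ \ {φ}) N)
    (hK : IsM2OMatching par depth (desc par u) K ∨
          IsM2OMatching par depth (desc par u \ {u}) K) :
    IsM2OMatching par depth Set.univ
      ((N.filter (fun v => v ∉ desc par u)) ∪ insert u K) := by
  obtain ⟨hN1, hN2⟩ := hN
  have hKd : ∀ v ∈ K, v ∈ desc par u := by
    intro v hv
    rcases hK with h | h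
    · exact (h.1 v hv).1
    · exact ((h.1 v hv).1).1
  have hKpar : ∀ v ∈ K, par v ∈ desc par u := by
    intro v hv
    rcases hK with h | h
    · exact (h.1 v hv).2.1
    · exact ((h.1 v hv).2.1).1
  have hKne : ∀ v ∈ K, v ≠ par v := by
    intro v hv
    rcases hK with h | h
    · exact (h.1 v hv).2.2
    · exact (h.1 v hv).2.2
  have hKu : u ∉ K := by
    intro h
    rcases hK with hk | hk
    · exact phi_not_mem_desc hroot hune (hu ▸ (hk.1 u h).2.1)
    · exact ((hk.1 u h).1).2 rfl
  set M : Finset V := (N.filter (fun v => v ∉ desc par u)) ∪ insert u K with hM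
  have hmemM : ∀ w, w ∈ M ↔ (w ∈ N ∧ w ∉ desc par u) ∨ w = u ∨ w ∈ K := by
    intro w
    simp only [hM, Finset.mem_union, Finset.mem_filter, Finset.mem_insert]
  constructor
  · intro v hv
    rw [hmemM] at hv
    refine ⟨Set.mem_univ _, Set.mem_univ _, ?_⟩
    rcases hv with ⟨hvN, -⟩ | rfl | hvK
    · exact (hN1 v hvN).2.2
    · rw [hu]; exact hune
    · exact hKne v hvK
  · intro v _
    by_cases hvφ : v = φ
    · subst hvφ
      rw [if_pos (by simp [hdepth0])]
      have hcard : M.filter (fun w => par w = v) = {u} := by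
        ext w
        simp only [Finset.mem_filter, Finset.mem_singleton]
        constructor
        · rintro ⟨hw, hpw⟩
          rw [hmemM] at hw
          rcases hw with ⟨hwN, -⟩ | rfl | hwK
          · exact absurd hpw (((hN1 w hwN).2.1).2)
          · rfl
          · exact absurd (hpw ▸ hKpar w hwK) (phi_not_mem_desc hroot hune)
        · rintro rfl
          exact ⟨(hmemM _).2 (Or.inr (Or.inl rfl)), hu⟩
      have hind : v ∉ M := by
        rw [hmemM]
        rintro (⟨hφN, -⟩ | h | hφK)
        · exact ((hN1 v hφN).1).2 rfl
        · exact hune h.symm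
        · exact phi_not_mem_desc hroot hune (hKd v hφK)
      rw [hcard, if_neg hind]
      simp
    · by_cases hvd : v ∈ desc par u
      · by_cases hvu : v = u
        · subst hvu
          have hd1 : depth v = 1 := by rw [hdepth v hune, hu, hdepth0]
          rw [if_neg (by simp [hd1])]
          rw [if_pos ((hmemM v).2 (Or.inr (Or.inl rfl)))]
          omega
        · have hcard : M.filter (fun w => par w = v) = K.filter (fun w => par w = v) := by
            ext w
            simp only [Finset.mem_filter]
            constructor
            · rintro ⟨hw, hpw⟩
              rw [hmemM] at hw
              rcases hw with ⟨hwN, hwd⟩ | rfl | hwK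
              · exact absurd (mem_desc_of_par (hpw ▸ hvd)) hwd
              · exact absurd (hu.symm.trans hpw).symm hvφ
              · exact ⟨hwK, hpw⟩
            · rintro ⟨hwK, hpw⟩
              exact ⟨(hmemM w).2 (Or.inr (Or.inr hwK)), hpw⟩
          have hiff : v ∈ M ↔ v ∈ K := by
            rw [hmemM]
            constructor
            · rintro (⟨-, hwd⟩ | h | h)
              · exact absurd hvd hwd
              · exact absurd h hvu
              · exact h
            · exact fun h => Or.inr (Or.inr h)
          rw [hcard]
          simp only [hiff]
          rcases hK with hk | hk
          · exact hk.2 v hvd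
          · exact hk.2 v ⟨hvd, hvu⟩
      · have hcard : M.filter (fun w => par w = v) = N.filter (fun w => par w = v) := by
          ext w
          simp only [Finset.mem_filter]
          constructor
          · rintro ⟨hw, hpw⟩
            rw [hmemM] at hw
            rcases hw with ⟨hwN, -⟩ | rfl | hwK
            · exact ⟨hwN, hpw⟩
            · exact absurd (hu.symm.trans hpw).symm hvφ
            · exact absurd (hpw ▸ hKpar w hwK) hvd
          · rintro ⟨hwN, hpw⟩
            refine ⟨(hmemM w).2 (Or.inl ⟨hwN, ?_⟩), hpw⟩
            intro hwd
            rcases eq_or_ne w u with rfl | hwu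
            · exact hvφ (hu.symm.trans hpw).symm
            · exact hvd (hpw ▸ par_mem_desc hwd hwu)
        have hiff : v ∈ M ↔ v ∈ N := by
          rw [hmemM]
          constructor
          · rintro (⟨h, -⟩ | rfl | h)
            · exact h
            · exact absurd (mem_desc_self _ _) hvd
            · exact absurd (hKd v h) hvd
          · intro h; exact Or.inl ⟨h, hvd⟩
        rw [hcard]
        simp only [hiff]
        exact hN2 v ⟨Set.mem_univ v, hvφ⟩

/-- L3: a matching of `univ` contains exactly one edge at the root. -/
lemma exists_top {par : V → V} {depth : V → ℕ} {φ : V}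
    (hroot : par φ = φ) (hdepth0 : depth φ = 0)
    {M : Finset V} (hM : IsM2OMatching par depth Set.univ M) :
    ∃ u ∈ M, par u = φ ∧ u ≠ φ ∧ ∀ w ∈ M, par w = φ → w = u := by
  obtain ⟨hM1, hM2⟩ := hM
  have hφM : φ ∉ M := fun h => (hM1 φ h).2.2 hroot.symm
  have h := hM2 φ (Set.mem_univ φ)
  rw [if_pos (by simp [hdepth0]), if_neg hφM, add_zero] at h
  obtain ⟨a, ha⟩ := Finset.card_eq_one.1 h
  have haf : a ∈ M.filter (fun w => par w = φ) := ha ▸ Finset.mem_singleton_self a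
  rw [Finset.mem_filter] at haf
  refine ⟨a, haf.1, haf.2, ?_, ?_⟩
  · intro haφ
    exact (hM1 a haf.1).2.2 (haφ.trans haf.2.symm)
  · intro w hw hpw
    have : w ∈ M.filter (fun w => par w = φ) := Finset.mem_filter.2 ⟨hw, hpw⟩
    rw [ha, Finset.mem_singleton] at this
    exact this

open Classical in
/-- L4: the part of a matching of `univ` inside the subtree of the matched child. -/
lemma split_matching {par : V → V} {depth : V → ℕ} {φ u : V}
    (hroot : par φ = φ) (hdepth0 : depth φ = 0)
    (hdepth : ∀ v, v ≠ φ → depth v = depth (par v) + 1)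
    {M : Finset V} (hM : IsM2OMatching par depth Set.univ M)
    (hu : par u = φ) (hune : u ≠ φ) :
    IsM2OMatching par depth (desc par u) (M.filter (fun v => v ∈ desc par u ∧ v ≠ u)) ∨
    IsM2OMatching par depth (desc par u \ {u}) (M.filter (fun v => v ∈ desc par u ∧ v ≠ u)) := by
  obtain ⟨hM1, hM2⟩ := hM
  set Md := M.filter (fun v => v ∈ desc par u ∧ v ≠ u) with hMd
  have hmem : ∀ w, w ∈ Md ↔ w ∈ M ∧ w ∈ desc par u ∧ w ≠ u := by
    intro w; simp [hMd, Finset.mem_filter]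
  -- transfer of the degree condition at any v ∈ desc u with v ≠ u
  have htrans : ∀ v, v ∈ desc par u → v ≠ u →
      (Md.filter (fun w => par w = v) = M.filter (fun w => par w = v)) ∧ (v ∈ Md ↔ v ∈ M) := by
    intro v hvd hvu
    have hvφ : v ≠ φ := ne_phi_of_mem_desc hroot hune hvd
    constructor
    · ext w
      simp only [Finset.mem_filter, hmem w, Finset.mem_filter]
      constructor
      · rintro ⟨⟨h1, -, -⟩, h2⟩; exact ⟨h1, h2⟩
      · rintro ⟨h1, h2⟩
        refine ⟨⟨h1, mem_desc_of_par (h2 ▸ hvd), ?_⟩, h2⟩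
        rintro rfl
        exact hvφ (hu.symm.trans h2).symm
    · rw [hmem]
      exact ⟨fun h => h.1, fun h => ⟨h, hvd, hvu⟩⟩
  by_cases h : ∃ w ∈ M, par w = u
  · left
    constructor
    · intro v hv
      rw [hmem] at hv
      obtain ⟨hvM, hvd, hvu⟩ := hv
      exact ⟨hvd, par_mem_desc hvd hvu, (hM1 v hvM).2.2⟩
    · intro v hvd
      by_cases hvu : v = u
      · subst hvu
        have hd1 : depth v = 1 := by rw [hdepth v hune, hu, hdepth0]
        rw [if_neg (by simp [hd1])]
        obtain ⟨w, hwM, hpw⟩ := h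
        have hwMd : w ∈ Md.filter (fun w' => par w' = v) := by
          rw [Finset.mem_filter, hmem]
          refine ⟨⟨hwM, mem_desc_of_par (hpw ▸ mem_desc_self par v), ?_⟩, hpw⟩
          rintro rfl
          exact hune (hu ▸ hpw.symm ▸ rfl)
        have : 0 < (Md.filter (fun w' => par w' = v)).card := Finset.card_pos.2 ⟨w, hwMd⟩
        omega
      · obtain ⟨hcard, hiff⟩ := htrans v hvd hvu
        rw [hcard]
        simp only [hiff]
        exact hM2 v (Set.mem_univ v)
  · right
    constructor
    · intro v hv
      rw [hmem] at hv
      obtain ⟨hvM, hvd, hvu⟩ := hv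
      have hpvu : par v ≠ u := fun hp => h ⟨v, hvM, hp⟩
      exact ⟨⟨hvd, hvu⟩, ⟨par_mem_desc hvd hvu, hpvu⟩, (hM1 v hvM).2.2⟩
    · rintro v ⟨hvd, hvu⟩
      have hvu' : v ≠ u := hvu
      obtain ⟨hcard, hiff⟩ := htrans v hvd hvu'
      rw [hcard]
      simp only [hiff]
      exact hM2 v (Set.mem_univ v)

open Classical in
/-- L5: replace the matched-child subtree part by a matching of the full subtree,
    dropping the root edge, to get a matching of `univ \ {φ}`. -/
lemma replant_matching {par : V → V} {depth : V → ℕ} {φ u : V}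
    (hroot : par φ = φ)
    {M K : Finset V} (hM : IsM2OMatching par depth Set.univ M)
    (hu : par u = φ) (hune : u ≠ φ) (huniq : ∀ w ∈ M, par w = φ → w = u)
    (hK : IsM2OMatching par depth (desc par u) K) :
    IsM2OMatching par depth (Set.univ \ {φ})
      ((M.filter (fun v => v ∉ desc par u)) ∪ K) := by
  obtain ⟨hM1, hM2⟩ := hM
  obtain ⟨hK1, hK2⟩ := hK
  set R := M.filter (fun v => v ∉ desc par u) with hR
  have hmem : ∀ w, w ∈ R ∪ K ↔ (w ∈ M ∧ w ∉ desc par u) ∨ w ∈ K := by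
    intro w; simp [hR, Finset.mem_union, Finset.mem_filter]
  constructor
  · intro v hv
    rw [hmem] at hv
    rcases hv with ⟨hvM, hvd⟩ | hvK
    · refine ⟨⟨Set.mem_univ _, ?_⟩, ⟨Set.mem_univ _, ?_⟩, (hM1 v hvM).2.2⟩
      · rintro rfl
        exact (hM1 v hvM).2.2 hroot.symm
      · intro hpv
        exact hvd (huniq v hvM hpv ▸ mem_desc_self par u)
    · refine ⟨⟨Set.mem_univ _, ne_phi_of_mem_desc hroot hune (hK1 v hvK).1⟩,
        ⟨Set.mem_univ _, ne_phi_of_mem_desc hroot hune (hK1 v hvK).2.1⟩, (hK1 v hvK).2.2⟩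
  · rintro v ⟨-, hvφ⟩
    have hvφ' : v ≠ φ := hvφ
    by_cases hvd : v ∈ desc par u
    · have hcard : (R ∪ K).filter (fun w => par w = v) = K.filter (fun w => par w = v) := by
        ext w
        simp only [Finset.mem_filter, hmem w]
        constructor
        · rintro ⟨⟨hwM, hwd⟩ | hwK, hpw⟩
          · exact absurd (mem_desc_of_par (hpw ▸ hvd)) hwd
          · exact ⟨hwK, hpw⟩
        · rintro ⟨hwK, hpw⟩
          exact ⟨Or.inr hwK, hpw⟩
      have hiff : v ∈ R ∪ K ↔ v ∈ K := by
        rw [hmem]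
        exact ⟨fun h => h.elim (fun h' => absurd hvd h'.2) id, Or.inr⟩
      rw [hcard]
      simp only [hiff]
      exact hK2 v hvd
    · have hcard : (R ∪ K).filter (fun w => par w = v) = M.filter (fun w => par w = v) := by
        ext w
        simp only [Finset.mem_filter, hmem w]
        constructor
        · rintro ⟨⟨hwM, -⟩ | hwK, hpw⟩
          · exact ⟨hwM, hpw⟩
          · exact absurd (hpw ▸ (hK1 w hwK).2.1) hvd
        · rintro ⟨hwM, hpw⟩
          refine ⟨Or.inl ⟨hwM, ?_⟩, hpw⟩
          intro hwd
          rcases eq_or_ne w u with rfl | hwu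
          · exact hvφ' (hu.symm.trans hpw).symm
          · exact hvd (hpw ▸ par_mem_desc hwd hwu)
      have hiff : v ∈ R ∪ K ↔ v ∈ M := by
        rw [hmem]
        constructor
        · rintro (⟨h, -⟩ | h)
          · exact h
          · exact absurd ((hK1 v h).1) hvd
        · intro h; exact Or.inl ⟨h, hvd⟩
      rw [hcard]
      simp only [hiff]
      exact hM2 v (Set.mem_univ v)

end M2OAux

open M2OAux

theorem m2o_cost_recursion {V : Type*} [Fintype V] [DecidableEq V]
    (par : V → V) (depth : V → ℕ) (l : V → ℝ) (φ : V)
    (hl : ∀ v, 0 ≤ l v)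
    (hroot : par φ = φ) (hdepth0 : depth φ = 0)
    (hdepth : ∀ v, v ≠ φ → depth v = depth (par v) + 1)
    -- `C S` is the minimum cost of a many-to-one matching of `S`
    (C : Set V → ℝ)
    (hC : ∀ S : Set V, C S =
      sInf {c : ℝ | ∃ M : Finset V, IsM2OMatching par depth S M ∧ c = ∑ v ∈ M, l v})
    (children : Finset V)
    (hchildren : children = Finset.univ.filter (fun u => par u = φ ∧ u ≠ φ))
    (hne : children.Nonempty)
    -- all the relevant minimum-cost many-to-one matchings exist
    (hT : ∃ M, IsM2OMatching par depth Set.univ M)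
    (hTφ : ∃ M, IsM2OMatching par depth (Set.univ \ {φ}) M)
    (hTu : ∀ u ∈ children, ∃ M, IsM2OMatching par depth (desc par u) M)
    (hTu' : ∀ u ∈ children, ∃ M, IsM2OMatching par depth (desc par u \ {u}) M) :
    C Set.univ - C (Set.univ \ {φ}) =
      children.inf' hne
        (fun u => l u - max (C (desc par u) - C (desc par u \ {u})) 0) := by
  classical
  have hbdd : ∀ S : Set V,
      BddBelow {c : ℝ | ∃ M, IsM2OMatching par depth S M ∧ c = ∑ v ∈ M, l v} := by
    intro S
    exact ⟨0, by rintro c ⟨M, -, rfl⟩; exact Finset.sum_nonneg fun v _ => hl v⟩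
  have hub : ∀ (S : Set V) (M : Finset V), IsM2OMatching par depth S M →
      C S ≤ ∑ v ∈ M, l v := by
    intro S M h
    rw [hC S]
    exact csInf_le (hbdd S) ⟨M, h, rfl⟩
  have happrox : ∀ S : Set V, (∃ M, IsM2OMatching par depth S M) → ∀ ε : ℝ, 0 < ε →
      ∃ M, IsM2OMatching par depth S M ∧ ∑ v ∈ M, l v < C S + ε := by
    intro S hS ε hε
    obtain ⟨M0, hM0⟩ := hS
    have hne' : {c : ℝ | ∃ M, IsM2OMatching par depth S M ∧ c = ∑ v ∈ M, l v}.Nonempty :=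
      ⟨_, M0, hM0, rfl⟩
    have hlt : sInf {c : ℝ | ∃ M, IsM2OMatching par depth S M ∧ c = ∑ v ∈ M, l v}
        < C S + ε := by
      rw [← hC S]; exact lt_add_of_pos_right _ hε
    obtain ⟨c, ⟨M, hMm, rfl⟩, hclt⟩ := exists_lt_of_csInf_lt hne' hlt
    exact ⟨M, hMm, hclt⟩
  have hchild : ∀ u ∈ children, par u = φ ∧ u ≠ φ := by
    intro u hu; rw [hchildren] at hu; simpa using hu
  -- upper bound: for every child u
  have key1 : ∀ u ∈ children, C Set.univ ≤ C (Set.univ \ {φ}) +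
      (l u - max (C (desc par u) - C (desc par u \ {u})) 0) := by
    intro u huc
    obtain ⟨hu, hune⟩ := hchild u huc
    refine le_of_forall_pos_le_add ?_
    intro ε hε
    obtain ⟨N, hN, hNc⟩ := happrox _ hTφ (ε/2) (by linarith)
    have hNd := restrict_matching hroot hu hune hN
    have hNdc : C (desc par u) ≤ ∑ v ∈ N.filter (fun v => v ∈ desc par u), l v :=
      hub _ _ hNd
    have hsplit : ∑ v ∈ N.filter (fun v => v ∈ desc par u), l v
        + ∑ v ∈ N.filter (fun v => ¬ v ∈ desc par u), l v = ∑ v ∈ N, l v :=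
      Finset.sum_filter_add_sum_filter_not N _ _
    rcases le_total (C (desc par u)) (C (desc par u \ {u})) with hcase | hcase
    · obtain ⟨K, hK, hKc⟩ := happrox _ (hTu u huc) (ε/2) (by linarith)
      have hMm := graft_matching hroot hdepth0 hdepth hu hune hN (Or.inl hK)
      have hMc := hub _ _ hMm
      have huK : u ∉ K := fun h =>
        phi_not_mem_desc hroot hune (hu ▸ (hK.1 u h).2.1)
      have hdisj : Disjoint (N.filter (fun v => v ∉ desc par u)) (insert u K) := by
        rw [Finset.disjoint_left]
        intro w hw hw'
        rw [Finset.mem_filter] at hw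
        rcases Finset.mem_insert.1 hw' with rfl | hwK
        · exact hw.2 (mem_desc_self par _)
        · exact hw.2 ((hK.1 w hwK).1)
      rw [Finset.sum_union hdisj, Finset.sum_insert huK] at hMc
      have hmax : max (C (desc par u) - C (desc par u \ {u})) 0 = 0 :=
        max_eq_right (by linarith)
      rw [hmax]
      linarith
    · obtain ⟨K, hK, hKc⟩ := happrox _ (hTu' u huc) (ε/2) (by linarith)
      have hMm := graft_matching hroot hdepth0 hdepth hu hune hN (Or.inr hK)
      have hMc := hub _ _ hMm
      have huK : u ∉ K := fun h => ((hK.1 u h).1).2 rfl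
      have hdisj : Disjoint (N.filter (fun v => v ∉ desc par u)) (insert u K) := by
        rw [Finset.disjoint_left]
        intro w hw hw'
        rw [Finset.mem_filter] at hw
        rcases Finset.mem_insert.1 hw' with rfl | hwK
        · exact hw.2 (mem_desc_self par _)
        · exact hw.2 (((hK.1 w hwK).1).1)
      rw [Finset.sum_union hdisj, Finset.sum_insert huK] at hMc
      have hmax : max (C (desc par u) - C (desc par u \ {u})) 0
          = C (desc par u) - C (desc par u \ {u}) := max_eq_left (by linarith)
      rw [hmax]
      linarith
  -- lower bound
  have key2 : ∀ ε : ℝ, 0 < ε →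
      children.inf' hne (fun u => l u - max (C (desc par u) - C (desc par u \ {u})) 0)
        ≤ C Set.univ - C (Set.univ \ {φ}) + ε := by
    intro ε hε
    obtain ⟨M, hM, hMc⟩ := happrox _ hT (ε/2) (by linarith)
    obtain ⟨u, huM, hu, hune, huniq⟩ := exists_top hroot hdepth0 hM
    have huc : u ∈ children := by rw [hchildren]; simp [hu, hune]
    obtain ⟨K, hK, hKc⟩ := happrox _ (hTu u huc) (ε/2) (by linarith)
    have hrep := replant_matching hroot hM hu hune huniq hK
    have hdisjRK : Disjoint (M.filter (fun v => v ∉ desc par u)) K := by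
      rw [Finset.disjoint_left]
      intro w hw hwK
      rw [Finset.mem_filter] at hw
      exact hw.2 ((hK.1 w hwK).1)
    have hb : C (Set.univ \ {φ}) ≤ ∑ v ∈ M.filter (fun v => v ∉ desc par u), l v
        + ∑ v ∈ K, l v := by
      have h := hub _ _ hrep
      rwa [Finset.sum_union hdisjRK] at h
    -- cost decomposition of M
    have hfil : M.filter (fun v => v ∈ desc par u)
        = insert u (M.filter (fun v => v ∈ desc par u ∧ v ≠ u)) := by
      ext w
      simp only [Finset.mem_filter, Finset.mem_insert]
      constructor
      · rintro ⟨hwM, hwd⟩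
        rcases eq_or_ne w u with rfl | hwu
        · exact Or.inl rfl
        · exact Or.inr ⟨hwM, hwd, hwu⟩
      · rintro (rfl | ⟨h1, h2, -⟩)
        · exact ⟨huM, mem_desc_self par _⟩
        · exact ⟨h1, h2⟩
    have hnmem : u ∉ M.filter (fun v => v ∈ desc par u ∧ v ≠ u) := by simp
    have hdec : ∑ v ∈ M, l v = l u
        + ∑ v ∈ M.filter (fun v => v ∈ desc par u ∧ v ≠ u), l v
        + ∑ v ∈ M.filter (fun v => ¬ v ∈ desc par u), l v := by
      rw [← Finset.sum_filter_add_sum_filter_not M (fun v => v ∈ desc par u) l, hfil,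
        Finset.sum_insert hnmem]
    have hmin : min (C (desc par u)) (C (desc par u \ {u}))
        ≤ ∑ v ∈ M.filter (fun v => v ∈ desc par u ∧ v ≠ u), l v := by
      rcases split_matching hroot hdepth0 hdepth hM hu hune with h | h
      · exact le_trans (min_le_left _ _) (hub _ _ h)
      · exact le_trans (min_le_right _ _) (hub _ _ h)
    have hmaxmin : max (C (desc par u) - C (desc par u \ {u})) 0
        = C (desc par u) - min (C (desc par u)) (C (desc par u \ {u})) := by
      rcases le_total (C (desc par u)) (C (desc par u \ {u})) with h | h
      · rw [max_eq_right (by linarith), min_eq_left h]; ring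
      · rw [max_eq_left (by linarith), min_eq_right h]
    have hle : children.inf' hne
        (fun u => l u - max (C (desc par u) - C (desc par u \ {u})) 0)
        ≤ l u - max (C (desc par u) - C (desc par u \ {u})) 0 :=
      Finset.inf'_le _ huc
    rw [hmaxmin] at hle
    linarith
  refine le_antisymm (Finset.le_inf' hne _ ?_) (le_of_forall_pos_le_add key2)
  intro u huc
  have := key1 u huc
  linarith
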